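/- (Theorem 1, part 3: neutrality for linear h.) Let f be a contest production function, C a cost function, and consider a semi-symmetric conflict network with size set K, multiplicities d_k > 0 and prizes v_k > 0. Let (x_k*)_{k∈K} be a positive solution of the DE first-order system and x^u > 0 a solution of the UE first-order equation. If h(x) = f(x)/f'(x) is linear on (0,∞), i.e., h(x) = x/r for some r > 0, then the total efforts under DE and UE coincide: Σ_{k∈K} d_k x_k* = (Σ_{k∈K} d_k) x^u. -/

import Mathlib

/-- Theorem 1, part 3 (neutrality): if h = f/f' is linear on (0,∞), i.e.
h x = x / r for some r > 0, then total efforts under DE and UE coincide. -/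
theorem de_eq_ue_of_linear
    (f : ℝ → ℝ)
    (hf0 : f 0 = 0)
    (hf_diff : ∀ x > (0 : ℝ), DifferentiableAt ℝ f x)
    (hf'_diff : ∀ x > (0 : ℝ), DifferentiableAt ℝ (deriv f) x)
    (hf'_pos : ∀ x > (0 : ℝ), 0 < deriv f x)
    (hf''_nonpos : ∀ x > (0 : ℝ), deriv (deriv f) x ≤ 0)
    (C : ℝ → ℝ)
    (hC_smooth : ContDiffOn ℝ 2 C (Set.Ici (0 : ℝ)))
    (hC_mono : StrictMonoOn C (Set.Ici (0 : ℝ)))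
    (hC_conv : ConvexOn ℝ (Set.Ici (0 : ℝ)) C)
    (hC'_pos : ∀ μ > (0 : ℝ), 0 < deriv C μ)
    (K : Finset ℕ) (hK : K.Nonempty) (hK2 : ∀ k ∈ K, 2 ≤ k)
    (d v : ℕ → ℝ) (hd : ∀ k ∈ K, 0 < d k) (hv : ∀ k ∈ K, 0 < v k)
    (xs : ℕ → ℝ) (hxs : ∀ k ∈ K, 0 < xs k)
    (hDE : ∀ k ∈ K, v k * (((k : ℝ) - 1) / (k : ℝ) ^ 2) * (deriv f (xs k) / f (xs k))
      = deriv C (∑ ℓ ∈ K, d ℓ * xs ℓ))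
    (xu : ℝ) (hxu : 0 < xu)
    (hUE : (∑ ℓ ∈ K, d ℓ * v ℓ * (((ℓ : ℝ) - 1) / (ℓ : ℝ) ^ 2)) * (deriv f xu / f xu)
      = deriv C ((∑ ℓ ∈ K, d ℓ) * xu) * (∑ ℓ ∈ K, d ℓ))
    (hlin : ∃ r > (0 : ℝ), ∀ x > (0 : ℝ), f x / deriv f x = x / r) :
    ∑ k ∈ K, d k * xs k = (∑ k ∈ K, d k) * xu := by

  obtain ⟨r, hr, hlin⟩ := hlin
  -- ratio lemma: f' x / f x = r / x for x > 0
  have hfpos : ∀ x > (0:ℝ), 0 < f x := by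
    intro x hx
    have h1 := hlin x hx
    have h2 := hf'_pos x hx
    rw [div_eq_div_iff h2.ne' hr.ne'] at h1
    nlinarith [mul_pos hx h2]
  have hratio : ∀ x > (0:ℝ), deriv f x / f x = r / x := by
    intro x hx
    have h1 := hlin x hx
    have h2 := hf'_pos x hx
    have h3 := hfpos x hx
    rw [div_eq_div_iff h2.ne' hr.ne'] at h1
    field_simp
    nlinarith [h1]
  set X := ∑ k ∈ K, d k * xs k with hXdef
  set D := ∑ k ∈ K, d k with hDdef
  have hX : 0 < X := Finset.sum_pos (fun k hk => mul_pos (hd k hk) (hxs k hk)) hK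
  have hD : 0 < D := Finset.sum_pos hd hK
  have hY : 0 < D * xu := mul_pos hD hxu
  set S := ∑ ℓ ∈ K, d ℓ * v ℓ * (((ℓ : ℝ) - 1) / (ℓ : ℝ) ^ 2) with hSdef
  have halpha : ∀ k ∈ K, 0 < ((k : ℝ) - 1) / (k : ℝ) ^ 2 := by
    intro k hk
    have : (2:ℝ) ≤ (k:ℝ) := by exact_mod_cast hK2 k hk
    have hk0 : (0:ℝ) < (k:ℝ) := by linarith
    apply div_pos <;> [linarith; positivity]
  have hS : 0 < S :=
    Finset.sum_pos (fun k hk => mul_pos (mul_pos (hd k hk) (hv k hk)) (halpha k hk)) hK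
  -- from the DE system: X * C'(X) = r * S
  have hXeq : X * deriv C X = r * S := by
    have key : ∀ k ∈ K, d k * xs k * deriv C X
        = r * (d k * v k * (((k : ℝ) - 1) / (k : ℝ) ^ 2)) := by
      intro k hk
      have h1 := hDE k hk
      rw [hratio (xs k) (hxs k hk)] at h1
      have hx := hxs k hk
      have hx' : xs k ≠ 0 := ne_of_gt hx
      have hk0 : ((k:ℝ)) ≠ 0 := by
        have : (2:ℝ) ≤ (k:ℝ) := by exact_mod_cast hK2 k hk
        positivity
      field_simp at h1 ⊢
      linear_combination -(d k * h1)
    calc X * deriv C X = ∑ k ∈ K, d k * xs k * deriv C X := by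
          rw [hXdef, Finset.sum_mul]
      _ = ∑ k ∈ K, r * (d k * v k * (((k : ℝ) - 1) / (k : ℝ) ^ 2)) :=
          Finset.sum_congr rfl key
      _ = r * S := by rw [hSdef, Finset.mul_sum]
  -- from the UE equation: (D * xu) * C'(D * xu) = r * S
  have hYeq : (D * xu) * deriv C (D * xu) = r * S := by
    rw [hratio xu hxu] at hUE
    have hx' : xu ≠ 0 := ne_of_gt hxu
    field_simp at hUE
    rw [mul_comm xu D] at hUE
    nlinarith [hUE]

  -- derivative of C is monotone on (0, ∞)
  have hCdiff : ∀ x ∈ Set.Ioi (0:ℝ), DifferentiableAt ℝ C x := by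
    intro x hx
    have hmem : Set.Ici (0:ℝ) ∈ nhds x := Ici_mem_nhds hx
    exact ((hC_smooth.contDiffAt hmem).differentiableAt (by norm_num))
  have hmono : MonotoneOn (deriv C) (Set.Ioi (0:ℝ)) :=
    (hC_conv.subset Set.Ioi_subset_Ici_self (convex_Ioi 0)).monotoneOn_deriv hCdiff
  -- conclude X = D * xu by strict monotonicity of t ↦ t * C'(t)
  rcases lt_trichotomy X (D * xu) with h | h | h
  · exfalso
    have h1 : deriv C X ≤ deriv C (D * xu) := hmono hX hY h.le
    have h2 : 0 < deriv C (D * xu) := hC'_pos _ hY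
    nlinarith [hXeq, hYeq]
  · exact h
  · exfalso
    have h1 : deriv C (D * xu) ≤ deriv C X := hmono hY hX h.le
    have h2 : 0 < deriv C X := hC'_pos _ hX
    nlinarith [hXeq, hYeq]
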